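/- Let F be a finite class of functions f : X × A → [0,1] containing f*, where E[r(a)|x] = f*(x,a) and rewards lie in [0,1]. Given n i.i.d. samples (x_i, a_i, r_i) with a_i drawn from an arbitrary kernel conditionally independent of r_i given x_i, let f̂ = argmin_{f∈F} Σ_i (f(x_i,a_i) − r_i)². Then with probability at least 1 − δ, E_{x,a}[(f̂(x,a) − f*(x,a))²] ≤ 25·log(|F|/δ)/n. -/

import Mathlib

lemma exp_quad' {x : ℝ} (hx : |x| ≤ 1) : Real.exp x ≤ 1 + x + (3/4) * x^2 := by
  have h := Real.exp_bound hx (n := 2) (by norm_num)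
  have hs : ∑ m ∈ Finset.range 2, x ^ m / m.factorial = 1 + x := by
    simp [Finset.sum_range_succ]
  rw [hs] at h
  have h2 : |x| ^ 2 = x ^ 2 := sq_abs x
  rw [h2] at h
  have h4 := (abs_le.mp h).2
  have h5 : x ^ 2 * (((2:ℕ).succ : ℝ) / ((2:ℕ).factorial * (2:ℕ))) = (3/4) * x^2 := by
    norm_num [Nat.factorial]; ring
  rw [h5] at h4
  linarith

lemma mgf_bound' {T : Type*} [Fintype T] (p : T → ℝ) (hp0 : ∀ z, 0 ≤ p z)
    (hp1 : ∑ z, p z = 1) (Y : T → ℝ) (hY0 : ∑ z, p z * Y z = 0)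
    (v : ℝ) (hY2 : ∑ z, p z * Y z ^ 2 ≤ v)
    (lam : ℝ) (hbound : ∀ z, |lam * Y z| ≤ 1) :
    ∑ z, p z * Real.exp (lam * Y z) ≤ Real.exp ((3/4) * lam^2 * v) := by
  have h1 : ∑ z, p z * Real.exp (lam * Y z)
      ≤ ∑ z, p z * (1 + lam * Y z + (3/4) * (lam * Y z)^2) :=
    Finset.sum_le_sum fun z _ => mul_le_mul_of_nonneg_left (exp_quad' (hbound z)) (hp0 z)
  have h2 : ∑ z, p z * (1 + lam * Y z + (3/4) * (lam * Y z)^2)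
      = (∑ z, p z) + lam * (∑ z, p z * Y z) + (3/4) * lam^2 * (∑ z, p z * Y z ^ 2) := by
    rw [Finset.mul_sum, Finset.mul_sum, ← Finset.sum_add_distrib, ← Finset.sum_add_distrib]
    exact Finset.sum_congr rfl fun z _ => by ring
  have h3 : (∑ z, p z) + lam * (∑ z, p z * Y z) + (3/4) * lam^2 * (∑ z, p z * Y z ^ 2)
      ≤ 1 + (3/4) * lam^2 * v := by
    rw [hp1, hY0]
    have : (3/4) * lam^2 * (∑ z, p z * Y z ^ 2) ≤ (3/4) * lam^2 * v :=
      mul_le_mul_of_nonneg_left hY2 (by positivity)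
    linarith
  have h4 : 1 + (3/4) * lam^2 * v ≤ Real.exp ((3/4) * lam^2 * v) := by
    have := Real.add_one_le_exp ((3/4) * lam^2 * v)
    linarith
  linarith

lemma chernoff' {T : Type*} [Fintype T] (n : ℕ) (p : T → ℝ) (hp0 : ∀ z, 0 ≤ p z)
    (Y : T → ℝ) (lam t b : ℝ) (hlam : 0 ≤ lam)
    (hmgf : ∑ z, p z * Real.exp (lam * Y z) ≤ Real.exp b) :
    ∑ s : Fin n → T, (if t ≤ ∑ i, Y (s i) then ∏ i, p (s i) else 0)
      ≤ Real.exp ((n:ℝ) * b - lam * t) := by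
  have hmgfpos : (0:ℝ) ≤ ∑ z, p z * Real.exp (lam * Y z) :=
    Finset.sum_nonneg fun z _ => mul_nonneg (hp0 z) (Real.exp_pos _).le
  have key : ∀ s : Fin n → T, (if t ≤ ∑ i, Y (s i) then ∏ i, p (s i) else 0)
      ≤ Real.exp (- (lam * t)) * ∏ i, (p (s i) * Real.exp (lam * Y (s i))) := by
    intro s
    have hP : (0:ℝ) ≤ ∏ i, p (s i) := Finset.prod_nonneg fun i _ => hp0 _
    have hprod : Real.exp (-(lam * t)) * ∏ i, (p (s i) * Real.exp (lam * Y (s i)))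
        = (∏ i, p (s i)) * Real.exp (lam * (∑ i, Y (s i)) - lam * t) := by
      rw [Finset.prod_mul_distrib, ← Real.exp_sum, ← Finset.mul_sum]
      rw [mul_comm (Real.exp _) _, mul_assoc, ← Real.exp_add]
      ring_nf
    rw [hprod]
    split_ifs with h
    · have h1 : (1:ℝ) ≤ Real.exp (lam * (∑ i, Y (s i)) - lam * t) := by
        rw [show lam * (∑ i, Y (s i)) - lam * t = lam * ((∑ i, Y (s i)) - t) by ring]
        exact Real.one_le_exp (mul_nonneg hlam (by linarith))
      nlinarith [h1]
    · positivity
  calc ∑ s : Fin n → T, (if t ≤ ∑ i, Y (s i) then ∏ i, p (s i) else 0)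
      ≤ ∑ s : Fin n → T, Real.exp (-(lam * t)) * ∏ i, (p (s i) * Real.exp (lam * Y (s i))) :=
        Finset.sum_le_sum fun s _ => key s
    _ = Real.exp (-(lam * t)) * (∑ z, p z * Real.exp (lam * Y z)) ^ n := by
        rw [← Finset.mul_sum, Fintype.sum_pow]
    _ ≤ Real.exp (-(lam * t)) * Real.exp b ^ n := by
        gcongr
    _ = Real.exp ((n:ℝ) * b - lam * t) := by
        rw [← Real.exp_nat_mul, ← Real.exp_add]; ring_nf

set_option maxHeartbeats 2000000 in
/-- Finite-class least-squares excess risk bound. With a finite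
realizable class `F` (via `φ : F → X → A → ℝ`, with `f* = φ fstar`), `n` i.i.d.
samples `(x_i, a_i, r_i)` drawn as `x ∼ Dx`, `a ∼ k(·|x)`, reward vector
`r ∼ Dr(·|x)` (so `a` and `r` are conditionally independent given `x`) with
observed reward `r_i = r(a_i) ∈ [0,1]`, and `f̂` any empirical squared-loss
minimizer over `F`, with probability at least `1 − δ` over the `n` samples,
`E_{x,a}[(f̂(x,a) − f*(x,a))²] ≤ 25·log(|F|/δ)/n`. -/
theorem stmt10 {X A V F : Type*} [Fintype X] [Fintype A] [Fintype V] [Fintype F]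
    (n : ℕ) (hn : 0 < n) (δ : ℝ) (hδ0 : 0 < δ) (hδ1 : δ ≤ 1)
    (Dx : X → ℝ) (k : X → A → ℝ) (Dr : X → V → ℝ) (rv : V → A → ℝ)
    (hDx0 : ∀ x, 0 ≤ Dx x) (hDx1 : ∑ x, Dx x = 1)
    (hk0 : ∀ x a, 0 ≤ k x a) (hk1 : ∀ x, ∑ a, k x a = 1)
    (hDr0 : ∀ x w, 0 ≤ Dr x w) (hDr1 : ∀ x, ∑ w, Dr x w = 1)
    (hr : ∀ w a, rv w a ∈ Set.Icc (0:ℝ) 1)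
    (φ : F → X → A → ℝ) (hφ : ∀ g x a, φ g x a ∈ Set.Icc (0:ℝ) 1)
    (fstar : F)
    (hreal : ∀ x a, ∑ w, Dr x w * rv w a = φ fstar x a)
    (fhat : (Fin n → X × A × V) → F)
    (hfhat : ∀ (s : Fin n → X × A × V) (g : F),
      ∑ i, (φ (fhat s) (s i).1 (s i).2.1 - rv (s i).2.2 (s i).2.1) ^ 2
        ≤ ∑ i, (φ g (s i).1 (s i).2.1 - rv (s i).2.2 (s i).2.1) ^ 2) :
    1 - δ ≤
      ∑ s : Fin n → X × A × V,
        (if (∑ x, ∑ a, Dx x * k x a * (φ (fhat s) x a - φ fstar x a) ^ 2)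
              ≤ 25 * Real.log (Fintype.card F / δ) / n
         then ∏ i, Dx (s i).1 * k (s i).1 (s i).2.1 * Dr (s i).1 (s i).2.2
         else 0) := by
  classical
  set C2 := Real.log ((Fintype.card F : ℝ) / δ) with hC2def
  set p : X × A × V → ℝ := fun z => Dx z.1 * k z.1 z.2.1 * Dr z.1 z.2.2 with hpdef
  set L : F → X × A × V → ℝ := fun f z =>
    (φ f z.1 z.2.1 - rv z.2.2 z.2.1)^2 - (φ fstar z.1 z.2.1 - rv z.2.2 z.2.1)^2 with hLdef
  set μ : F → ℝ := fun f => ∑ x, ∑ a, Dx x * k x a * (φ f x a - φ fstar x a)^2 with hμdef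
  have hn' : (0:ℝ) < n := by exact_mod_cast hn
  have tsum : ∀ g : X × A × V → ℝ, ∑ z, g z = ∑ x, ∑ a, ∑ w, g (x, (a, w)) := by
    intro g
    rw [Fintype.sum_prod_type]
    exact Finset.sum_congr rfl fun x _ => Fintype.sum_prod_type _
  have hp0 : ∀ z, 0 ≤ p z := fun z =>
    mul_nonneg (mul_nonneg (hDx0 _) (hk0 _ _)) (hDr0 _ _)
  have hp1 : ∑ z, p z = 1 := by
    rw [tsum]
    have e1 : ∀ x a, ∑ w, p (x, (a, w)) = Dx x * k x a := by
      intro x a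
      show ∑ w, Dx x * k x a * Dr x w = Dx x * k x a
      rw [← Finset.mul_sum, hDr1, mul_one]
    calc ∑ x, ∑ a, ∑ w, p (x, (a, w)) = ∑ x, ∑ a, Dx x * k x a := by
          exact Finset.sum_congr rfl fun x _ => Finset.sum_congr rfl fun a _ => e1 x a
      _ = ∑ x, Dx x := by
          refine Finset.sum_congr rfl fun x _ => ?_
          rw [← Finset.mul_sum, hk1, mul_one]
      _ = 1 := hDx1
  -- the key mean identity: E[L f] = μ f  (cross term vanishes)
  have hmean : ∀ f, ∑ z, p z * L f z = μ f := by
    intro f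
    rw [tsum, hμdef]
    refine Finset.sum_congr rfl fun x _ => Finset.sum_congr rfl fun a _ => ?_
    have e : ∀ w, p (x, (a, w)) * L f (x, (a, w))
        = (Dx x * k x a * ((φ f x a - φ fstar x a)^2
            + 2*(φ f x a - φ fstar x a)*(φ fstar x a))) * Dr x w
          - (Dx x * k x a * (2*(φ f x a - φ fstar x a))) * (Dr x w * rv w a) := by
      intro w
      show (Dx x * k x a * Dr x w) * ((φ f x a - rv w a)^2 - (φ fstar x a - rv w a)^2) = _
      ring
    rw [Finset.sum_congr rfl fun w _ => e w, Finset.sum_sub_distrib,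
      ← Finset.mul_sum, ← Finset.mul_sum, hDr1, hreal]
    ring
  have hμ0 : ∀ f, 0 ≤ μ f := by
    intro f
    refine Finset.sum_nonneg fun x _ => Finset.sum_nonneg fun a _ => ?_
    exact mul_nonneg (mul_nonneg (hDx0 _) (hk0 _ _)) (sq_nonneg _)
  have hμ1 : ∀ f, μ f ≤ 1 := by
    intro f
    have step : μ f ≤ ∑ x, ∑ a, Dx x * k x a := by
      refine Finset.sum_le_sum fun x _ => Finset.sum_le_sum fun a _ => ?_
      have h1 := hφ f x a
      have h2 := hφ fstar x a
      simp only [Set.mem_Icc] at h1 h2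
      have hsq : (φ f x a - φ fstar x a)^2 ≤ 1 := by nlinarith
      nlinarith [mul_nonneg (hDx0 x) (hk0 x a)]
    have tot : ∑ x, ∑ a, Dx x * k x a = 1 := by
      calc ∑ x, ∑ a, Dx x * k x a = ∑ x, Dx x := by
            refine Finset.sum_congr rfl fun x _ => ?_
            rw [← Finset.mul_sum, hk1, mul_one]
        _ = 1 := hDx1
    linarith [step, tot.le]
  have hL1 : ∀ f z, -1 ≤ L f z ∧ L f z ≤ 1 := by
    intro f z
    have h1 := hφ f z.1 z.2.1
    have h2 := hφ fstar z.1 z.2.1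
    have h3 := hr z.2.2 z.2.1
    simp only [Set.mem_Icc] at h1 h2 h3
    constructor <;> · show _ ≤ _; simp only [hLdef]; nlinarith
  have hsq : ∀ f, ∑ z, p z * (L f z)^2 ≤ 4 * μ f := by
    intro f
    have step1 : ∑ z, p z * (L f z)^2
        ≤ ∑ z, p z * (4 * (φ f z.1 z.2.1 - φ fstar z.1 z.2.1)^2) := by
      refine Finset.sum_le_sum fun z _ => ?_
      refine mul_le_mul_of_nonneg_left ?_ (hp0 z)
      have h1 := hφ f z.1 z.2.1
      have h2 := hφ fstar z.1 z.2.1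
      have h3 := hr z.2.2 z.2.1
      simp only [Set.mem_Icc] at h1 h2 h3
      have key : (L f z)^2 = (φ f z.1 z.2.1 - φ fstar z.1 z.2.1)^2
          * (φ f z.1 z.2.1 + φ fstar z.1 z.2.1 - 2 * rv z.2.2 z.2.1)^2 := by
        show ((φ f z.1 z.2.1 - rv z.2.2 z.2.1)^2 - (φ fstar z.1 z.2.1 - rv z.2.2 z.2.1)^2)^2 = _
        ring
      rw [key]
      obtain ⟨h1a, h1b⟩ := h1; obtain ⟨h2a, h2b⟩ := h2; obtain ⟨h3a, h3b⟩ := h3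
      have hb : (φ f z.1 z.2.1 + φ fstar z.1 z.2.1 - 2 * rv z.2.2 z.2.1)^2 ≤ 4 := by nlinarith
      calc (φ f z.1 z.2.1 - φ fstar z.1 z.2.1)^2
            * (φ f z.1 z.2.1 + φ fstar z.1 z.2.1 - 2 * rv z.2.2 z.2.1)^2
          ≤ (φ f z.1 z.2.1 - φ fstar z.1 z.2.1)^2 * 4 :=
            mul_le_mul_of_nonneg_left hb (sq_nonneg _)
        _ = 4 * (φ f z.1 z.2.1 - φ fstar z.1 z.2.1)^2 := by ring
    have step2 : ∑ z, p z * (4 * (φ f z.1 z.2.1 - φ fstar z.1 z.2.1)^2) = 4 * μ f := by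
      rw [tsum, hμdef, Finset.mul_sum]
      refine Finset.sum_congr rfl fun x _ => ?_
      rw [Finset.mul_sum]
      refine Finset.sum_congr rfl fun a _ => ?_
      show ∑ w, (Dx x * k x a * Dr x w) * (4 * (φ f x a - φ fstar x a)^2) = _
      have : ∀ w, (Dx x * k x a * Dr x w) * (4 * (φ f x a - φ fstar x a)^2)
          = (Dx x * k x a * (4 * (φ f x a - φ fstar x a)^2)) * Dr x w := fun w => by ring
      rw [Finset.sum_congr rfl fun w _ => this w, ← Finset.mul_sum, hDr1, mul_one]
      ring
    linarith
  have hSL : ∀ s : Fin n → X × A × V, ∑ i, L (fhat s) (s i) ≤ 0 := by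
    intro s
    have e : ∑ i, L (fhat s) (s i)
        = (∑ i, (φ (fhat s) (s i).1 (s i).2.1 - rv (s i).2.2 (s i).2.1)^2)
          - ∑ i, (φ fstar (s i).1 (s i).2.1 - rv (s i).2.2 (s i).2.1)^2 := by
      rw [← Finset.sum_sub_distrib]
    rw [e]
    linarith [hfhat s fstar]
  -- reduce to the probability statement
  show 1 - δ ≤ ∑ s : Fin n → X × A × V,
      (if μ (fhat s) ≤ 25 * C2 / n then ∏ i, p (s i) else 0)
  have hP0 : ∀ s : Fin n → X × A × V, 0 ≤ ∏ i, p (s i) :=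
    fun s => Finset.prod_nonneg fun i _ => hp0 _
  by_cases hδlt : δ < 1
  case neg =>
    push_neg at hδlt
    refine le_trans (by linarith) (Finset.sum_nonneg fun s _ => ?_)
    split_ifs
    · exact hP0 s
    · exact le_refl 0
  have hcard : 0 < Fintype.card F := Fintype.card_pos_iff.mpr ⟨fstar⟩
  have hcard' : (1:ℝ) ≤ Fintype.card F := by exact_mod_cast hcard
  have hC2pos : 0 < C2 := Real.log_pos (by rw [lt_div_iff₀ hδ0]; linarith)
  have hexp : Real.exp (-C2) = δ / Fintype.card F := by
    rw [hC2def, Real.exp_neg, Real.exp_log (by positivity), inv_div]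
  set tf : F → ℝ := fun f => Real.sqrt (12 * C2) * Real.sqrt (n * μ f) with htf
  set S : Finset F := Finset.univ.filter (fun f => 25 * C2 / n < μ f) with hS
  -- per-function Bernstein/Chernoff tail bound
  have tail : ∀ f ∈ S,
      ∑ s : Fin n → X × A × V,
        (if tf f ≤ ∑ i, (μ f - L f (s i)) then ∏ i, p (s i) else 0)
      ≤ δ / Fintype.card F := by
    intro f hf
    have hmf : 25 * C2 / n < μ f := (Finset.mem_filter.mp hf).2
    have hμpos : 0 < μ f := lt_of_le_of_lt (by positivity) hmf
    have hm : 25 * C2 < (n:ℝ) * μ f := by rw [div_lt_iff₀ hn'] at hmf; linarith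
    set m : ℝ := (n:ℝ) * μ f with hmdef
    have hmpos : 0 < m := by nlinarith
    set lam : ℝ := Real.sqrt C2 / Real.sqrt (3 * m) with hlam
    have hsqrt3m : Real.sqrt (3*m) = Real.sqrt 3 * Real.sqrt m := Real.sqrt_mul (by norm_num) m
    have hs3 : (0:ℝ) < Real.sqrt 3 := Real.sqrt_pos.mpr (by norm_num)
    have hsm : 0 < Real.sqrt m := Real.sqrt_pos.mpr hmpos
    have hsC2 : 0 < Real.sqrt C2 := Real.sqrt_pos.mpr hC2pos
    have hlamnn : 0 ≤ lam := by positivity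
    have hlamle : lam ≤ 1/2 := by
      have h4 : Real.sqrt (4 * C2) ≤ Real.sqrt (3 * m) := Real.sqrt_le_sqrt (by nlinarith)
      have h4' : Real.sqrt (4 * C2) = 2 * Real.sqrt C2 := by
        rw [show (4:ℝ) * C2 = 2^2 * C2 by ring, Real.sqrt_mul (by positivity),
          Real.sqrt_sq (by norm_num)]
      rw [hlam, div_le_iff₀ (by rw [hsqrt3m]; positivity)]
      rw [h4'] at h4
      linarith
    have hbound : ∀ z, |lam * (μ f - L f z)| ≤ 1 := by
      intro z
      have h := hL1 f z
      have habs : |μ f - L f z| ≤ 2 := by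
        rw [abs_le]
        constructor
        · linarith [hμ0 f, h.2]
        · linarith [hμ1 f, h.1]
      calc |lam * (μ f - L f z)| = lam * |μ f - L f z| := by
            rw [abs_mul, abs_of_nonneg hlamnn]
        _ ≤ (1/2) * 2 := mul_le_mul hlamle habs (abs_nonneg _) (by norm_num)
        _ = 1 := by norm_num
    have hY0 : ∑ z, p z * (μ f - L f z) = 0 := by
      have e : ∀ z : X × A × V, p z * (μ f - L f z) = μ f * p z - p z * L f z :=
        fun z => by ring
      rw [Finset.sum_congr rfl fun z _ => e z, Finset.sum_sub_distrib, ← Finset.mul_sum,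
        hp1, hmean f]
      ring
    have hY2 : ∑ z, p z * (μ f - L f z)^2 ≤ 4 * μ f := by
      have e : ∀ z : X × A × V, p z * (μ f - L f z)^2
          = μ f^2 * p z - 2 * μ f * (p z * L f z) + p z * (L f z)^2 := fun z => by ring
      rw [Finset.sum_congr rfl fun z _ => e z, Finset.sum_add_distrib,
        Finset.sum_sub_distrib, ← Finset.mul_sum, ← Finset.mul_sum, hp1, hmean f]
      nlinarith [hsq f, sq_nonneg (μ f)]
    have hmgf : ∑ z, p z * Real.exp (lam * (μ f - L f z))
        ≤ Real.exp ((3/4) * lam^2 * (4 * μ f)) :=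
      mgf_bound' p hp0 hp1 _ hY0 _ hY2 lam hbound
    have hch := chernoff' n p hp0 (fun z => μ f - L f z) lam (tf f)
      ((3/4) * lam^2 * (4 * μ f)) hlamnn hmgf
    have hlam2 : lam^2 = C2 / (3 * m) := by
      rw [hlam, div_pow, Real.sq_sqrt hC2pos.le, Real.sq_sqrt (by positivity)]
    have h12' : Real.sqrt (12 * C2) = 2 * (Real.sqrt 3 * Real.sqrt C2) := by
      rw [show (12:ℝ) * C2 = 2^2 * (3 * C2) by ring, Real.sqrt_mul (by positivity),
        Real.sqrt_sq (by norm_num), Real.sqrt_mul (by norm_num)]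
    have htff : tf f = 2 * (Real.sqrt 3 * Real.sqrt C2) * Real.sqrt m := by
      simp only [htf]
      rw [h12', ← hmdef]
    have hexpo : (n:ℝ) * ((3/4) * lam^2 * (4 * μ f)) - lam * tf f = -C2 := by
      have hne : 3 * ((n:ℝ) * μ f) ≠ 0 := ne_of_gt (by nlinarith)
      have h1 : (n:ℝ) * ((3/4) * lam^2 * (4 * μ f)) = C2 := by
        rw [hlam2, hmdef]
        field_simp
      have h2 : lam * tf f = 2 * C2 := by
        rw [hlam, htff, hsqrt3m, div_mul_eq_mul_div,
          div_eq_iff (ne_of_gt (by positivity : (0:ℝ) < Real.sqrt 3 * Real.sqrt m))]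
        linear_combination (2 * Real.sqrt 3 * Real.sqrt m) * Real.sq_sqrt hC2pos.le
      linarith
    calc ∑ s : Fin n → X × A × V,
          (if tf f ≤ ∑ i, (μ f - L f (s i)) then ∏ i, p (s i) else 0)
        ≤ Real.exp ((n:ℝ) * ((3/4) * lam^2 * (4 * μ f)) - lam * tf f) := hch
      _ = δ / Fintype.card F := by rw [hexpo, hexp]
  -- union bound over the bad functions
  have cover : ∀ s : Fin n → X × A × V,
      (if 25 * C2 / n < μ (fhat s) then ∏ i, p (s i) else 0)
      ≤ ∑ f ∈ S, (if tf f ≤ ∑ i, (μ f - L f (s i)) then ∏ i, p (s i) else 0) := by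
    intro s
    have hnn : ∀ f ∈ S, 0 ≤ (if tf f ≤ ∑ i, (μ f - L f (s i)) then ∏ i, p (s i) else 0) := by
      intro f _
      split_ifs
      · exact hP0 s
      · exact le_refl 0
    split_ifs with h
    · have hfS : fhat s ∈ S := Finset.mem_filter.mpr ⟨Finset.mem_univ _, h⟩
      have hsum : ∑ i, (μ (fhat s) - L (fhat s) (s i))
          = n * μ (fhat s) - ∑ i, L (fhat s) (s i) := by
        rw [Finset.sum_sub_distrib, Finset.sum_const, Finset.card_univ, Fintype.card_fin,
          nsmul_eq_mul]
      have hm : 25 * C2 < (n:ℝ) * μ (fhat s) := by rw [div_lt_iff₀ hn'] at h; linarith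
      have hm0 : (0:ℝ) ≤ n * μ (fhat s) := by nlinarith [hμ0 (fhat s)]
      have htle : tf (fhat s) ≤ (n:ℝ) * μ (fhat s) := by
        have h1 : Real.sqrt (12 * C2) ≤ Real.sqrt ((n:ℝ) * μ (fhat s)) :=
          Real.sqrt_le_sqrt (by nlinarith)
        calc tf (fhat s) = Real.sqrt (12*C2) * Real.sqrt ((n:ℝ) * μ (fhat s)) := by
              simp only [htf]
          _ ≤ Real.sqrt ((n:ℝ)*μ (fhat s)) * Real.sqrt ((n:ℝ)*μ (fhat s)) :=
              mul_le_mul_of_nonneg_right h1 (Real.sqrt_nonneg _)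
          _ = (n:ℝ) * μ (fhat s) := Real.mul_self_sqrt hm0
      have hev : tf (fhat s) ≤ ∑ i, (μ (fhat s) - L (fhat s) (s i)) := by
        rw [hsum]
        linarith [hSL s]
      calc (∏ i, p (s i)) = (if tf (fhat s) ≤ ∑ i, (μ (fhat s) - L (fhat s) (s i))
            then ∏ i, p (s i) else 0) := by rw [if_pos hev]
        _ ≤ ∑ f ∈ S, (if tf f ≤ ∑ i, (μ f - L f (s i)) then ∏ i, p (s i) else 0) :=
            Finset.single_le_sum hnn hfS
    · exact Finset.sum_nonneg hnn
  have hGc : ∑ s : Fin n → X × A × V,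
      (if 25 * C2 / n < μ (fhat s) then ∏ i, p (s i) else 0) ≤ δ := by
    calc ∑ s : Fin n → X × A × V, (if 25 * C2 / n < μ (fhat s) then ∏ i, p (s i) else 0)
        ≤ ∑ s : Fin n → X × A × V, ∑ f ∈ S,
            (if tf f ≤ ∑ i, (μ f - L f (s i)) then ∏ i, p (s i) else 0) :=
          Finset.sum_le_sum fun s _ => cover s
      _ = ∑ f ∈ S, ∑ s : Fin n → X × A × V,
            (if tf f ≤ ∑ i, (μ f - L f (s i)) then ∏ i, p (s i) else 0) :=
          Finset.sum_comm
      _ ≤ ∑ f ∈ S, δ / Fintype.card F := Finset.sum_le_sum tail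
      _ = S.card * (δ / Fintype.card F) := by rw [Finset.sum_const, nsmul_eq_mul]
      _ ≤ Fintype.card F * (δ / Fintype.card F) := by
          have hc : (S.card:ℝ) ≤ Fintype.card F := by
            exact_mod_cast (Finset.card_filter_le _ _).trans_eq Finset.card_univ
          exact mul_le_mul_of_nonneg_right hc (by positivity)
      _ = δ := by field_simp
  have htot : ∑ s : Fin n → X × A × V, ∏ i, p (s i) = 1 := by
    rw [← Fintype.sum_pow, hp1, one_pow]
  have hsplit : ∑ s : Fin n → X × A × V,
      (if μ (fhat s) ≤ 25 * C2 / n then ∏ i, p (s i) else 0)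
      = 1 - ∑ s : Fin n → X × A × V,
          (if 25 * C2 / n < μ (fhat s) then ∏ i, p (s i) else 0) := by
    rw [← htot, ← Finset.sum_sub_distrib]
    refine Finset.sum_congr rfl fun s _ => ?_
    by_cases h : μ (fhat s) ≤ 25 * C2 / n
    · rw [if_pos h, if_neg (not_lt.mpr h)]; ring
    · rw [if_neg h, if_pos (not_le.mp h)]; ring
  rw [hsplit]
  linarith [hGc]
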